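/- arXiv:1904.00162 — 2 statements merged into one kernel-verified Lean document; each statement's English description precedes it below -/
import Mathlib

section
/- Let μ be a positive regular Borel measure on ℝⁿ × ℝⁿ that is finite on compact sets and satisfies μ(Y × (Z + h)) = μ(Y × Z) for all Borel sets Y, Z ⊂ ℝⁿ and all h ∈ ℝⁿ. Then there exists a positive regular Borel measure ϱ on ℝⁿ such that μ = ϱ ⊗ ν_n, i.e. μ(Y × Z) = ϱ(Y)·ν_n(Z) for all Borel Y, Z ⊂ ℝⁿ, where ν_n is Lebesgue measure on ℝⁿ. -/
noncomputable section
open MeasureTheory Complex Finset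

open scoped Real

variable {n : ℕ}

/-- `|z|² = ∑ |z_j|²` for `z ∈ ℂⁿ`. -/
def absSq {n : ℕ} (z : Fin n → ℂ) : ℝ := ∑ j, ‖z j‖ ^ 2

/-- Membership in the Fock space `F²(ℂⁿ)`: entire and square integrable against the Gaussian. -/
def MemFock {n : ℕ} (f : (Fin n → ℂ) → ℂ) : Prop :=
  Differentiable ℂ f ∧
    Integrable (fun z => ‖f z‖ ^ 2 * Real.exp (-absSq z))

/-- Squared Fock norm. -/
def fockNormSq {n : ℕ} (f : (Fin n → ℂ) → ℂ) : ℝ :=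
  (Real.pi ^ n)⁻¹ * ∫ z, ‖f z‖ ^ 2 * Real.exp (-absSq z)

def fockNorm {n : ℕ} (f : (Fin n → ℂ) → ℂ) : ℝ := Real.sqrt (fockNormSq f)

/-- Fock inner product. -/
def fockInner {n : ℕ} (f g : (Fin n → ℂ) → ℂ) : ℂ :=
  ((Real.pi : ℂ) ^ n)⁻¹ * ∫ z, f z * (starRingEnd ℂ) (g z) * (Real.exp (-absSq z) : ℂ)

/-- FC measure with constant ω. -/
def IsFC {n : ℕ} (μ : Measure (Fin n → ℂ)) (ω : ℝ) : Prop :=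
  ∀ f : (Fin n → ℂ) → ℂ, MemFock f →
    ∫⁻ z, ENNReal.ofReal (‖f z‖ ^ 2 * Real.exp (-absSq z)) ∂μ
      ≤ ENNReal.ofReal (ω * fockNormSq f)

/-- `z · conj w`. -/
def dotC {n : ℕ} (z w : Fin n → ℂ) : ℂ := ∑ j, z j * (starRingEnd ℂ) (w j)

/-- Toeplitz operator with measure symbol. -/
def toeplitz {n : ℕ} (μ : Measure (Fin n → ℂ)) (f : (Fin n → ℂ) → ℂ) : (Fin n → ℂ) → ℂ :=
  fun z => ((Real.pi : ℂ) ^ n)⁻¹ *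
    ∫ w, Complex.exp (dotC z w) * f w * (Real.exp (-absSq w) : ℂ) ∂μ

/-- Identification of ℝⁿ × ℝⁿ with ℂⁿ via z = x + iy. -/
def eqv {n : ℕ} (p : (Fin n → ℝ) × (Fin n → ℝ)) : Fin n → ℂ := fun j => ⟨p.1 j, p.2 j⟩

/-- A measure on ℂⁿ is horizontal if it is ϱ ⊗ ν_n. -/
def IsHorizontal {n : ℕ} (μ : Measure (Fin n → ℂ)) : Prop :=
  ∃ ϱ : Measure (Fin n → ℝ), ϱ.Regular ∧ μ = Measure.map eqv (ϱ.prod volume)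

/-- Weyl operator. -/
def weyl {n : ℕ} (h : Fin n → ℂ) (f : (Fin n → ℂ) → ℂ) : (Fin n → ℂ) → ℂ :=
  fun z => Complex.exp (dotC z h - (absSq h : ℂ) / 2) * f (z - h)

/-- purely imaginary vector ih. -/
def iC {n : ℕ} (h : Fin n → ℝ) : Fin n → ℂ := fun j => Complex.I * (h j : ℂ)

/-- Partial complex derivative in direction j. -/
def pderiv' {n : ℕ} (j : Fin n) (f : (Fin n → ℂ) → ℂ) : (Fin n → ℂ) → ℂ :=
  fun z => fderiv ℂ f z (Pi.single j 1)

/-- Iterated partial derivative ∂^k. -/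
def multiPD {n : ℕ} (k : Fin n → ℕ) (f : (Fin n → ℂ) → ℂ) : (Fin n → ℂ) → ℂ :=
  (List.finRange n).foldr (fun j g => (pderiv' j)^[k j] g) f

/-- Weighted measure μ_p with real exponents p. -/
def wMeasure {n : ℕ} (μ : Measure (Fin n → ℂ)) (p : Fin n → ℝ) : Measure (Fin n → ℂ) :=
  μ.withDensity fun z =>
    ENNReal.ofReal (∏ j, (1 + (z j).re ^ 2) ^ (p j) * (1 + (z j).im ^ 2) ^ (p j))

/-- Polydisk centered at z with polyradius r. -/
def polydisk {n : ℕ} (z : Fin n → ℂ) (r : Fin n → ℝ) : Set (Fin n → ℂ) :=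
  {w | ∀ j, ‖w j - z j‖ < r j}

/-- k-FC measure with constant ω. -/
def IsKFC {n : ℕ} (k : Fin n → ℕ) (μ : Measure (Fin n → ℂ)) (ω : ℝ) : Prop :=
  ∀ f : (Fin n → ℂ) → ℂ, MemFock f →
    ∫⁻ z, ENNReal.ofReal (‖multiPD k f z‖ ^ 2 * Real.exp (-absSq z)) ∂μ
      ≤ ENNReal.ofReal ω *
        ∫⁻ z, ENNReal.ofReal (‖f z‖ ^ 2 * Real.exp (-absSq z))

/-- k-FC in the extended sense (k given via m = 2k): sup over z of μ_k of unit polydisks. -/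
def IsKFCext {n : ℕ} (m : Fin n → ℕ) (μ : Measure (Fin n → ℂ)) : Prop :=
  (⨆ z : Fin n → ℂ, wMeasure μ (fun j => (m j : ℝ) / 2) (polydisk z fun _ => 1)) < ⊤

def dotR {n : ℕ} (x : Fin n → ℝ) (z : Fin n → ℂ) : ℂ := ∑ j, (x j : ℂ) * z j
def sqC {n : ℕ} (z : Fin n → ℂ) : ℂ := ∑ j, z j ^ 2
def sqR {n : ℕ} (x : Fin n → ℝ) : ℝ := ∑ j, x j ^ 2
def conjV {n : ℕ} (z : Fin n → ℂ) : Fin n → ℂ := fun j => (starRingEnd ℂ) (z j)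

/-- Bargmann transform B* : L²(ℝⁿ) → F²(ℂⁿ). -/
def bargmannStar {n : ℕ} (f : (Fin n → ℝ) → ℂ) : (Fin n → ℂ) → ℂ := fun z =>
  (Complex.ofReal ((Real.pi ^ ((n : ℝ) / 4))⁻¹)) *
    ∫ x, f x * Complex.exp ((Real.sqrt 2 : ℂ) * dotR x z - (sqR x : ℂ) / 2 - sqC z / 2)

/-- Inverse Bargmann transform B : F²(ℂⁿ) → L²(ℝⁿ). -/
def bargmann {n : ℕ} (g : (Fin n → ℂ) → ℂ) : (Fin n → ℝ) → ℂ := fun x =>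
  (Complex.ofReal ((Real.pi ^ ((n : ℝ) / 4))⁻¹)) * ((Real.pi : ℂ) ^ n)⁻¹ *
    ∫ z, g z * Complex.exp ((Real.sqrt 2 : ℂ) * dotR x (conjV z) - (sqR x : ℂ) / 2
      - sqC (conjV z) / 2) * (Real.exp (-absSq z) : ℂ)

/-- γ_ϱ spectral function. -/
def gammaRho {n : ℕ} (ϱ : Measure (Fin n → ℝ)) (x : Fin n → ℝ) : ℝ :=
  (Real.sqrt (2 / Real.pi)) ^ n *
    ∫ y, Real.exp (-(∑ j, (x j - Real.sqrt 2 * y j) ^ 2)) ∂ϱ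

/-- Physicists' Hermite polynomial. -/
def hermiteH (m : ℕ) (t : ℝ) : ℝ :=
  (-1 : ℝ) ^ m * Real.exp (t ^ 2) * (deriv^[m] fun s : ℝ => Real.exp (-s ^ 2)) t

/-- The measure ν_{n,β} on ℝⁿ. -/
def nuMeasure {n : ℕ} (β : Fin n → ℝ) : Measure (Fin n → ℝ) :=
  volume.withDensity fun y => ENNReal.ofReal (∏ j, (1 + y j ^ 2) ^ (-(β j)))


/-- Berezin transform of a positive measure (as a lower integral). -/
def berezinL {n : ℕ} (μ : Measure (Fin n → ℂ)) (z : Fin n → ℂ) : ENNReal :=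
  ENNReal.ofReal ((Real.pi ^ n)⁻¹) *
    ∫⁻ w, ENNReal.ofReal (Real.exp (-absSq (z - w))) ∂μ

/-- a positive regular Borel measure on ℝⁿ×ℝⁿ, finite on compact sets, invariant
under translations in the second factor, is a product ϱ ⊗ ν_n. -/
theorem stmt7 (μ : Measure ((Fin n → ℝ) × (Fin n → ℝ))) (hreg : μ.Regular)
    (hfin : IsFiniteMeasureOnCompacts μ)
    (hinv : ∀ (Y Z : Set (Fin n → ℝ)), MeasurableSet Y → MeasurableSet Z →
      ∀ h : Fin n → ℝ, μ (Y ×ˢ ((fun z => z + h) '' Z)) = μ (Y ×ˢ Z)) :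
    ∃ ϱ : Measure (Fin n → ℝ), ϱ.Regular ∧
      ∀ (Y Z : Set (Fin n → ℝ)), MeasurableSet Y → MeasurableSet Z →
        μ (Y ×ˢ Z) = ϱ Y * volume Z := by
  classical
  haveI := hfin
  set I : Set (Fin n → ℝ) := Set.pi Set.univ fun _ => Set.Ico (0:ℝ) 1 with hIdef
  have hImeas : MeasurableSet I := MeasurableSet.univ_pi fun _ => measurableSet_Ico
  have hIvol : volume I = 1 := by rw [hIdef, volume_pi_pi]; simp [Real.volume_Ico]
  have hIsub : I ⊆ Set.pi Set.univ fun _ : Fin n => Set.Icc (0:ℝ) 1 :=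
    Set.pi_mono fun j _ => Set.Ico_subset_Icc_self
  have hIcc : IsCompact (Set.pi Set.univ fun _ : Fin n => Set.Icc (0:ℝ) 1) :=
    isCompact_univ_pi fun _ => isCompact_Icc
  -- key step for bounded Y
  have key : ∀ (Y : Set (Fin n → ℝ)), MeasurableSet Y → Bornology.IsBounded Y →
      ∀ (Z : Set (Fin n → ℝ)), MeasurableSet Z → μ (Y ×ˢ Z) = μ (Y ×ˢ I) * volume Z := by
    intro Y hY hYb Z hZ
    set ν : Measure (Fin n → ℝ) := (μ.restrict (Y ×ˢ Set.univ)).map Prod.snd with hνdef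
    have hνapp : ∀ (S : Set (Fin n → ℝ)), MeasurableSet S → ν S = μ (Y ×ˢ S) := by
      intro S hS
      rw [hνdef, Measure.map_apply measurable_snd hS,
        Measure.restrict_apply (measurable_snd hS)]
      congr 1
      ext p
      simp [Set.mem_prod, and_comm]
    haveI hinvν : ν.IsAddLeftInvariant := by
      constructor
      intro g
      ext S hS
      rw [Measure.map_apply (measurable_const_add g) hS,
        hνapp _ ((measurable_const_add g) hS), hνapp _ hS]
      have hpre : (fun z => g + z) ⁻¹' S = (fun z => z + (-g)) '' S := by
        ext z
        simp only [Set.mem_preimage, Set.mem_image]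
        constructor
        · intro h; exact ⟨g + z, h, by abel⟩
        · rintro ⟨w, hw, rfl⟩; simpa [add_comm, add_assoc] using hw
      rw [hpre, hinv Y S hY hS (-g)]
    haveI hfinν : IsFiniteMeasureOnCompacts ν := by
      constructor
      intro K hK
      rw [hνapp K hK.measurableSet]
      exact lt_of_le_of_lt
        (measure_mono (Set.prod_mono subset_closure subset_rfl))
        ((hYb.isCompact_closure.prod hK).measure_lt_top)
    have hsmul := Measure.isAddLeftInvariant_eq_smul ν (volume : Measure (Fin n → ℝ))
    have h1 : μ (Y ×ˢ Z) = Measure.addHaarScalarFactor ν volume * volume Z := by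
      rw [← hνapp Z hZ]; conv_lhs => rw [hsmul]
      simp [Measure.smul_apply]
    have h2 : μ (Y ×ˢ I) = Measure.addHaarScalarFactor ν volume := by
      rw [← hνapp I hImeas]; conv_lhs => rw [hsmul]
      rw [Measure.smul_apply, hIvol, ENNReal.smul_def, smul_eq_mul, mul_one]
    rw [h1, h2]
  -- define ϱ
  set ϱ : Measure (Fin n → ℝ) := (μ.restrict (Set.univ ×ˢ I)).map Prod.fst with hϱdef
  have hϱapp : ∀ (Y : Set (Fin n → ℝ)), MeasurableSet Y → ϱ Y = μ (Y ×ˢ I) := by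
    intro Y hY
    rw [hϱdef, Measure.map_apply measurable_fst hY,
      Measure.restrict_apply (measurable_fst hY)]
    congr 1
    ext p
    simp [Set.mem_prod]
  haveI hϱfin : IsFiniteMeasureOnCompacts ϱ := by
    constructor
    intro K hK
    rw [hϱapp K hK.measurableSet]
    exact lt_of_le_of_lt (measure_mono (Set.prod_mono subset_rfl hIsub))
      ((hK.prod hIcc).measure_lt_top)
  refine ⟨ϱ, inferInstance, ?_⟩
  intro Y Z hY hZ
  set B : ℕ → Set (Fin n → ℝ) := fun m => Y ∩ Metric.closedBall 0 (m : ℝ) with hB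
  have hBmeas : ∀ m, MeasurableSet (B m) := fun m =>
    hY.inter Metric.isClosed_closedBall.measurableSet
  have hBmono : Monotone B := fun a b hab =>
    Set.inter_subset_inter subset_rfl (Metric.closedBall_subset_closedBall (by exact_mod_cast hab))
  have hBunion : (⋃ m, B m) = Y := by
    ext x
    simp only [hB, Set.mem_iUnion, Set.mem_inter_iff, Metric.mem_closedBall, dist_zero_right]
    constructor
    · rintro ⟨m, hx, _⟩; exact hx
    · intro hx
      obtain ⟨m, hm⟩ := exists_nat_ge ‖x‖
      exact ⟨m, hx, hm⟩
  have hBbound : ∀ m, Bornology.IsBounded (B m) := fun m =>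
    (Metric.isBounded_closedBall).subset Set.inter_subset_right
  have hMZ : Monotone fun m => B m ×ˢ Z := fun a b hab => Set.prod_mono (hBmono hab) subset_rfl
  have hMI : Monotone fun m => B m ×ˢ I := fun a b hab => Set.prod_mono (hBmono hab) subset_rfl
  have hYZ : μ (Y ×ˢ Z) = ⨆ m, μ (B m ×ˢ Z) := by
    rw [← hMZ.directed_le.measure_iUnion]
    congr 1
    rw [← Set.iUnion_prod_const, hBunion]
  have hYI : ϱ Y = ⨆ m, μ (B m ×ˢ I) := by
    rw [hϱapp Y hY, ← hMI.directed_le.measure_iUnion]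
    congr 1
    rw [← Set.iUnion_prod_const, hBunion]
  rw [hYZ, hYI, ENNReal.iSup_mul]
  congr 1
  ext m
  exact key (B m) (hBmeas m) (hBbound m) Z hZ


end
end

section
/- Let 𝓛 be a Lagrangian plane of the standard symplectic space (ℝ^{2n}, ω₀), identified with a real n-dimensional subspace of ℂⁿ, and let X be a unitary n×n complex matrix with X·𝓛 = iℝⁿ (as real subspaces of ℂⁿ). Let μ be a positive regular Borel measure on ℂⁿ that is finite on compact sets, and define μ_{X*}(E) = μ(X*·E) for Borel E ⊂ ℂⁿ, where X* is the conjugate transpose of X. Then μ is 𝓛-invariant, i.e. μ(E + h) = μ(E) for every Borel set E ⊂ ℂⁿ and every h ∈ 𝓛, if and only if μ_{X*} is horizontal, i.e. there exists a positive regular Borel measure ϱ on ℝⁿ with μ_{X*} = ϱ ⊗ ν_n. -/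
noncomputable section
open MeasureTheory Complex Finset

open scoped Real

variable {n : ℕ}

/-- The standard symplectic form ω₀ on ℝⁿ × ℝⁿ. -/
def sympForm {n : ℕ} (p q : (Fin n → ℝ) × (Fin n → ℝ)) : ℝ :=
  (∑ j, p.1 j * q.2 j) - ∑ j, p.2 j * q.1 j

section AuxStmt19

open scoped Matrix ENNReal NNReal

/-- Inverse of `eqv`. -/
def eqvS {n : ℕ} (z : Fin n → ℂ) : (Fin n → ℝ) × (Fin n → ℝ) :=
  (fun j => (z j).re, fun j => (z j).im)

lemma eqv_eqvS {n : ℕ} (z : Fin n → ℂ) : eqv (eqvS z) = z := by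
  funext j; rfl

lemma eqvS_eqv {n : ℕ} (p : (Fin n → ℝ) × (Fin n → ℝ)) : eqvS (eqv p) = p := rfl

lemma continuous_eqv {n : ℕ} : Continuous (eqv (n := n)) := by
  apply continuous_pi
  intro j
  have : (fun p : (Fin n → ℝ) × (Fin n → ℝ) => eqv p j)
      = fun p => (p.1 j : ℂ) + (p.2 j : ℂ) * Complex.I := by
    funext p; exact Complex.mk_eq_add_mul_I _ _
  rw [this]
  fun_prop

lemma continuous_eqvS {n : ℕ} : Continuous (eqvS (n := n)) := by
  refine Continuous.prodMk ?_ ?_ <;> exact continuous_pi fun j => by fun_prop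

/-- `eqv` as a homeomorphism. -/
def eqvHomeo (n : ℕ) : ((Fin n → ℝ) × (Fin n → ℝ)) ≃ₜ (Fin n → ℂ) where
  toFun := eqv
  invFun := eqvS
  left_inv := eqvS_eqv
  right_inv := eqv_eqvS
  continuous_toFun := continuous_eqv
  continuous_invFun := continuous_eqvS

lemma eqv_add {n : ℕ} (p q : (Fin n → ℝ) × (Fin n → ℝ)) : eqv (p + q) = eqv p + eqv q := by
  funext j
  apply Complex.ext <;> simp [eqv]

lemma eqv_neg {n : ℕ} (p : (Fin n → ℝ) × (Fin n → ℝ)) : eqv (-p) = -eqv p := by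
  funext j
  apply Complex.ext <;> simp [eqv]

lemma eqvS_add {n : ℕ} (z w : Fin n → ℂ) : eqvS (z + w) = eqvS z + eqvS w := by
  apply Prod.ext <;> · funext j; simp [eqvS]

lemma continuous_mulVecFn {n : ℕ} (A : Matrix (Fin n) (Fin n) ℂ) : Continuous A.mulVec := by
  have h := A.mulVecLin.continuous_of_finiteDimensional
  exact h

lemma conjT_mulVec_mulVec {n : ℕ} {X : Matrix (Fin n) (Fin n) ℂ}
    (hX : X ∈ Matrix.unitaryGroup (Fin n) ℂ) (v : Fin n → ℂ) :
    Xᴴ.mulVec (X.mulVec v) = v := by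
  rw [Matrix.mulVec_mulVec, ← Matrix.star_eq_conjTranspose, hX.1, Matrix.one_mulVec]

lemma mulVec_conjT_mulVec {n : ℕ} {X : Matrix (Fin n) (Fin n) ℂ}
    (hX : X ∈ Matrix.unitaryGroup (Fin n) ℂ) (v : Fin n → ℂ) :
    X.mulVec (Xᴴ.mulVec v) = v := by
  rw [Matrix.mulVec_mulVec, ← Matrix.star_eq_conjTranspose, hX.2, Matrix.one_mulVec]

/-- Translation invariance in image form from map form. -/
lemma image_translate_eq {n : ℕ} (m : Measure (Fin n → ℂ)) (v : Fin n → ℂ)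
    (hmap : Measure.map (· + (-v)) m = m) {E : Set (Fin n → ℂ)} (hE : MeasurableSet E) :
    m ((fun z => z + v) '' E) = m E := by
  have himg : (fun z => z + v) '' E = (· + (-v)) ⁻¹' E := by
    ext z
    constructor
    · rintro ⟨w, hw, rfl⟩
      simpa using hw
    · intro hz
      exact ⟨z + (-v), hz, neg_add_cancel_right z v⟩
  rw [himg, ← Measure.map_apply (measurable_add_const _) hE, hmap]

/-- The key construction: a measure on ℂⁿ invariant under all purely imaginary translations is
horizontal. -/
lemma horizontal_of_imaginary_invariant {n : ℕ} (μXs : Measure (Fin n → ℂ))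
    [IsFiniteMeasureOnCompacts μXs]
    (hy : ∀ y : Fin n → ℝ, Measure.map (· + eqv ((0 : Fin n → ℝ), y)) μXs = μXs) :
    IsHorizontal μXs := by
  classical
  set e : ((Fin n → ℝ) × (Fin n → ℝ)) ≃ₜ (Fin n → ℂ) := eqvHomeo n with he
  set τ : Measure ((Fin n → ℝ) × (Fin n → ℝ)) := Measure.map e.symm μXs with hτ
  haveI : IsFiniteMeasureOnCompacts τ := Measure.IsFiniteMeasureOnCompacts.map μXs e.symm
  have τinv : ∀ y : Fin n → ℝ, Measure.map (· + ((0 : Fin n → ℝ), y)) τ = τ := by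
    intro y
    rw [hτ, Measure.map_map (measurable_add_const _) e.symm.continuous.measurable]
    have hcomp : (· + ((0 : Fin n → ℝ), y)) ∘ ⇑e.symm
        = ⇑e.symm ∘ (· + eqv ((0 : Fin n → ℝ), y)) := by
      funext z
      show eqvS z + ((0 : Fin n → ℝ), y) = eqvS (z + eqv ((0 : Fin n → ℝ), y))
      rw [eqvS_add, eqvS_eqv]
    rw [hcomp, ← Measure.map_map e.symm.continuous.measurable (measurable_add_const _), hy y]
  set I : Set (Fin n → ℝ) := Set.Icc 0 1 with hI
  have hImeas : MeasurableSet I := measurableSet_Icc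
  have hIvol : volume I = 1 := by
    simp [hI, Real.volume_Icc_pi]
  set ϱ : Measure (Fin n → ℝ) := Measure.map Prod.fst (τ.restrict (Set.univ ×ˢ I)) with hϱ
  have hϱ_apply : ∀ A : Set (Fin n → ℝ), MeasurableSet A → ϱ A = τ (A ×ˢ I) := by
    intro A hA
    rw [hϱ, Measure.map_apply measurable_fst hA, Measure.restrict_apply (measurable_fst hA)]
    congr 1
    ext p
    simp [Set.mem_prod, and_comm]
  -- rectangle formula, bounded case
  have key_bdd : ∀ A : Set (Fin n → ℝ), MeasurableSet A → Bornology.IsBounded A →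
      ∀ B : Set (Fin n → ℝ), MeasurableSet B → τ (A ×ˢ B) = τ (A ×ˢ I) * volume B := by
    intro A hA hAbd B hB
    set σ : Measure (Fin n → ℝ) := Measure.map Prod.snd (τ.restrict (A ×ˢ Set.univ)) with hσ
    have hσ_apply : ∀ B : Set (Fin n → ℝ), MeasurableSet B → σ B = τ (A ×ˢ B) := by
      intro B hB
      rw [hσ, Measure.map_apply measurable_snd hB, Measure.restrict_apply (measurable_snd hB)]
      congr 1
      ext p
      simp [Set.mem_prod, and_comm]
    obtain ⟨r, hr⟩ := hAbd.subset_closedBall 0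
    haveI : IsFiniteMeasureOnCompacts σ := by
      constructor
      intro K hK
      rw [hσ_apply K hK.measurableSet]
      calc τ (A ×ˢ K) ≤ τ (Metric.closedBall 0 r ×ˢ K) :=
            measure_mono (Set.prod_mono hr subset_rfl)
        _ < ⊤ := ((isCompact_closedBall 0 r).prod hK).measure_lt_top
    haveI : σ.IsAddLeftInvariant := by
      constructor
      intro a
      ext B hB
      rw [Measure.map_apply (measurable_const_add a) hB,
        hσ_apply _ (hB.preimage (measurable_const_add a)), hσ_apply B hB]
      have hset : A ×ˢ ((a + ·) ⁻¹' B) = (· + ((0 : Fin n → ℝ), a)) ⁻¹' (A ×ˢ B) := by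
        ext p
        simp [Set.mem_prod, add_comm]
      rw [hset, ← Measure.map_apply (measurable_add_const _) (hA.prod hB), τinv a]
    have hsmul := Measure.isAddLeftInvariant_eq_smul σ volume
    have hc : ∀ B : Set (Fin n → ℝ), σ B
        = (Measure.addHaarScalarFactor σ volume : ℝ≥0∞) * volume B := by
      intro B
      conv_lhs => rw [hsmul]
      rw [Measure.smul_apply, ENNReal.smul_def, smul_eq_mul]
    have h1 := hc B
    have h2 := hc I
    rw [hσ_apply B hB] at h1
    rw [hσ_apply I hImeas, hIvol, mul_one] at h2
    rw [h1, h2]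
  -- rectangle formula, general case
  have key : ∀ A B : Set (Fin n → ℝ), MeasurableSet A → MeasurableSet B →
      τ (A ×ˢ B) = ϱ A * volume B := by
    intro A B hA hB
    have hcover : ∀ C : Set (Fin n → ℝ), MeasurableSet C →
        τ (A ×ˢ C) = ⨆ k : ℕ, τ ((A ∩ Metric.closedBall 0 k) ×ˢ C) := by
      intro C hC
      have hU : (⋃ k : ℕ, (A ∩ Metric.closedBall 0 (k : ℝ)) ×ˢ C) = A ×ˢ C := by
        ext p
        simp only [Set.mem_iUnion, Set.mem_prod, Set.mem_inter_iff]
        constructor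
        · rintro ⟨k, ⟨⟨hA1, _⟩, hC1⟩⟩; exact ⟨hA1, hC1⟩
        · rintro ⟨hA1, hC1⟩
          obtain ⟨k, hk⟩ := exists_nat_ge (dist p.1 0)
          exact ⟨k, ⟨hA1, Metric.mem_closedBall.2 hk⟩, hC1⟩
      have hmono : Monotone fun k : ℕ => (A ∩ Metric.closedBall 0 (k : ℝ)) ×ˢ C := by
        intro i j hij
        apply Set.prod_mono _ subset_rfl
        exact Set.inter_subset_inter subset_rfl
          (Metric.closedBall_subset_closedBall (by exact_mod_cast hij))
      rw [← hU, Directed.measure_iUnion hmono.directed_le]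
    have hbdd : ∀ k : ℕ, Bornology.IsBounded (A ∩ Metric.closedBall 0 (k : ℝ)) :=
      fun k => Metric.isBounded_closedBall.subset Set.inter_subset_right
    have hmeas : ∀ k : ℕ, MeasurableSet (A ∩ Metric.closedBall 0 (k : ℝ)) :=
      fun k => hA.inter measurableSet_closedBall
    calc τ (A ×ˢ B) = ⨆ k : ℕ, τ ((A ∩ Metric.closedBall 0 k) ×ˢ B) := hcover B hB
      _ = ⨆ k : ℕ, τ ((A ∩ Metric.closedBall 0 k) ×ˢ I) * volume B := by
          congr 1; funext k; exact key_bdd _ (hmeas k) (hbdd k) B hB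
      _ = (⨆ k : ℕ, τ ((A ∩ Metric.closedBall 0 k) ×ˢ I)) * volume B := by
          rw [ENNReal.iSup_mul]
      _ = τ (A ×ˢ I) * volume B := by rw [← hcover I hImeas]
      _ = ϱ A * volume B := by rw [hϱ_apply A hA]
  haveI : IsFiniteMeasureOnCompacts ϱ := by
    constructor
    intro K hK
    rw [hϱ_apply K hK.measurableSet]
    exact (hK.prod isCompact_Icc).measure_lt_top
  have hprod : ϱ.prod volume = τ :=
    Measure.prod_eq fun s t hs ht => key s t hs ht
  refine ⟨ϱ, inferInstance, ?_⟩
  rw [hprod, hτ, Measure.map_map continuous_eqv.measurable e.symm.continuous.measurable]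
  have : eqv ∘ ⇑e.symm = id := by
    funext z; exact eqv_eqvS z
  rw [this, Measure.map_id]

end AuxStmt19

open scoped Matrix ENNReal NNReal

/-- for a Lagrangian plane 𝓛 and a unitary matrix X with X·𝓛 = iℝⁿ, a positive
regular Borel measure μ (finite on compacts) is 𝓛-invariant iff μ_{X*} is horizontal, where
μ_{X*}(E) = μ(X*·E). -/
theorem stmt19 (L : Submodule ℝ ((Fin n → ℝ) × (Fin n → ℝ)))
    (hdim : Module.finrank ℝ L = n)
    (hlag : ∀ v ∈ L, ∀ w ∈ L, sympForm v w = 0)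
    (X : Matrix (Fin n) (Fin n) ℂ) (hX : X ∈ Matrix.unitaryGroup (Fin n) ℂ)
    (hXL : (fun v => X.mulVec (eqv v)) '' (L : Set ((Fin n → ℝ) × (Fin n → ℝ)))
            = {z : Fin n → ℂ | ∀ j, (z j).re = 0})
    (μ μXs : Measure (Fin n → ℂ)) (hreg : μ.Regular) (hfin : IsFiniteMeasureOnCompacts μ)
    (hμXs : ∀ E : Set (Fin n → ℂ), MeasurableSet E → μXs E = μ (X.conjTranspose.mulVec '' E)) :
    (∀ E : Set (Fin n → ℂ), MeasurableSet E →
        ∀ h : (Fin n → ℝ) × (Fin n → ℝ), h ∈ L → μ ((fun z => z + eqv h) '' E) = μ E)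
      ↔ IsHorizontal μXs := by
  have mXmeas : Measurable X.mulVec := (continuous_mulVecFn X).measurable
  have mXsmeas : Measurable Xᴴ.mulVec := (continuous_mulVecFn Xᴴ).measurable
  -- μXs as a pushforward of μ
  have hμXs_map : μXs = Measure.map X.mulVec μ := by
    ext E hE
    rw [Measure.map_apply mXmeas hE, hμXs E hE]
    congr 1
    ext z
    constructor
    · rintro ⟨w, hw, rfl⟩
      simpa [mulVec_conjT_mulVec hX] using hw
    · intro hz
      exact ⟨X.mulVec z, hz, conjT_mulVec_mulVec hX z⟩
  have hμ_map : μ = Measure.map Xᴴ.mulVec μXs := by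
    rw [hμXs_map, Measure.map_map mXsmeas mXmeas]
    have : Xᴴ.mulVec ∘ X.mulVec = id := funext fun v => conjT_mulVec_mulVec hX v
    rw [this, Measure.map_id]
  constructor
  · -- invariance ⇒ horizontal
    intro hinv
    haveI : IsFiniteMeasureOnCompacts μXs := by
      constructor
      intro K hK
      rw [hμXs K hK.measurableSet]
      exact (hK.image (continuous_mulVecFn Xᴴ)).measure_lt_top
    apply horizontal_of_imaginary_invariant μXs
    intro y
    -- translate L-invariance of μ into map form
    have hmapμ : ∀ h' ∈ L, Measure.map (· + eqv h') μ = μ := by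
      intro h' hL'
      ext E hE
      rw [Measure.map_apply (measurable_add_const _) hE]
      have hset : (· + eqv h') ⁻¹' E = (fun z => z + eqv (-h')) '' E := by
        ext z
        constructor
        · intro hz
          refine ⟨z + eqv h', hz, ?_⟩
          rw [eqv_neg]
          exact add_neg_cancel_right z (eqv h')
        · rintro ⟨w, hw, rfl⟩
          simpa [eqv_neg] using hw
      rw [hset, hinv E hE (-h') (neg_mem hL')]
    obtain ⟨h, hL, hEq⟩ : ∃ h ∈ L, X.mulVec (eqv h) = eqv ((0 : Fin n → ℝ), y) := by
      have hmem : eqv ((0 : Fin n → ℝ), y) ∈ {z : Fin n → ℂ | ∀ j, (z j).re = 0} :=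
        fun j => rfl
      rw [← hXL] at hmem
      obtain ⟨h, hL, hEq⟩ := hmem
      exact ⟨h, hL, hEq⟩
    rw [hμXs_map, Measure.map_map (measurable_add_const _) mXmeas]
    have hcomp : (· + eqv ((0 : Fin n → ℝ), y)) ∘ X.mulVec = X.mulVec ∘ (· + eqv h) := by
      funext z
      show X.mulVec z + eqv ((0 : Fin n → ℝ), y) = X.mulVec (z + eqv h)
      rw [Matrix.mulVec_add, hEq]
    rw [hcomp, ← Measure.map_map mXmeas (measurable_add_const _), hmapμ h hL, ← hμXs_map]
  · -- horizontal ⇒ invariance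
    rintro ⟨ϱ, hϱreg, hϱeq⟩ E hE h hL
    haveI : ϱ.Regular := hϱreg
    -- invariance of μXs under purely imaginary translations
    have hy : ∀ y : Fin n → ℝ, Measure.map (· + eqv ((0 : Fin n → ℝ), y)) μXs = μXs := by
      intro y
      rw [hϱeq, Measure.map_map (measurable_add_const _) continuous_eqv.measurable]
      have hcomp : (· + eqv ((0 : Fin n → ℝ), y)) ∘ eqv
          = eqv ∘ (· + ((0 : Fin n → ℝ), y)) := by
        funext p
        show eqv p + eqv ((0 : Fin n → ℝ), y) = eqv (p + ((0 : Fin n → ℝ), y))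
        rw [eqv_add]
      rw [hcomp, ← Measure.map_map continuous_eqv.measurable (measurable_add_const _)]
      congr 1
      have hpm : (fun p : (Fin n → ℝ) × (Fin n → ℝ) => p + ((0 : Fin n → ℝ), y))
          = Prod.map id (· + y) := by
        funext p
        apply Prod.ext <;> simp
      have hvol : Measure.map (· + y) (volume : Measure (Fin n → ℝ)) = volume := by
        have : (fun x : Fin n → ℝ => x + y) = (y + ·) := funext fun x => add_comm x y
        rw [this]
        exact MeasureTheory.map_add_left_eq_self volume y
      rw [hpm, ← Measure.map_prod_map _ _ measurable_id (measurable_add_const y),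
        Measure.map_id, hvol]
    -- transfer to μ
    have hmapμ : ∀ h' ∈ L, Measure.map (· + eqv h') μ = μ := by
      intro h' hL'
      have hw : X.mulVec (eqv h') ∈ {z : Fin n → ℂ | ∀ j, (z j).re = 0} := by
        rw [← hXL]
        exact ⟨h', hL', rfl⟩
      set w := X.mulVec (eqv h') with hwdef
      have hw' : w = eqv ((0 : Fin n → ℝ), fun j => (w j).im) := by
        funext j
        apply Complex.ext
        · exact (hw j).trans rfl
        · rfl
      rw [hμ_map, Measure.map_map (measurable_add_const _) mXsmeas]
      have hcomp : (· + eqv h') ∘ Xᴴ.mulVec = Xᴴ.mulVec ∘ (· + w) := by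
        funext z
        show Xᴴ.mulVec z + eqv h' = Xᴴ.mulVec (z + w)
        rw [Matrix.mulVec_add, hwdef, conjT_mulVec_mulVec hX]
      rw [hcomp, ← Measure.map_map mXsmeas (measurable_add_const _)]
      have : Measure.map (· + w) μXs = μXs := by
        rw [hw']
        exact hy _
      rw [this, ← hμ_map]
    apply image_translate_eq μ (eqv h) _ hE
    have : -eqv h = eqv (-h) := by rw [eqv_neg]
    rw [this]
    exact hmapμ (-h) (neg_mem hL)

end
end
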